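/- Let G be a group, ρ : G → S(G) the right regular representation into the symmetric group on the underlying set of G, N a subgroup of S(G), and θ ∈ S(G) a bijection such that θ(x·y) = θ(x) * θ(y) where * is a group operation on G whose right translations form N. If additionally θ² is the identity and N normalizes-wise satisfies N_{S(G)}(N) ≥ N_{S(G)}(ρ(G)) with θ conjugating ρ(G) to N, then N_{S(G)}(N) = N_{S(G)}(ρ(G)). -/

import Mathlib

theorem stmt_10 {G : Type*} [Group G]
    (star : G → G → G) (θ : Equiv.Perm G)
    (hθstar : ∀ x y : G, θ (x * y) = star (θ x) (θ y))
    (N R : Subgroup (Equiv.Perm G))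
    (hR : ∀ σ : Equiv.Perm G, σ ∈ R ↔ ∃ h : G, σ = Equiv.mulRight h)
    (hN : ∀ σ : Equiv.Perm G, σ ∈ N ↔ ∃ h : G, ∀ x : G, σ x = star x h)
    (hθ2 : θ * θ = 1)
    (hconj : ∀ σ : Equiv.Perm G, σ ∈ R ↔ θ⁻¹ * σ * θ ∈ N)
    (hge : Subgroup.normalizer (R : Set (Equiv.Perm G)) ≤ Subgroup.normalizer (N : Set (Equiv.Perm G))) :
    Subgroup.normalizer (N : Set (Equiv.Perm G)) = Subgroup.normalizer (R : Set (Equiv.Perm G)) := by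
  have key : ∀ g : Equiv.Perm G, g ∈ Subgroup.normalizer (N : Set (Equiv.Perm G)) → θ * g * θ⁻¹ ∈ Subgroup.normalizer (R : Set (Equiv.Perm G)) := by
    intro g hg
    rw [Subgroup.mem_normalizer_iff] at hg ⊢
    intro σ
    rw [hconj σ, hconj (θ * g * θ⁻¹ * σ * (θ * g * θ⁻¹)⁻¹)]
    have := hg (θ⁻¹ * σ * θ)
    convert this using 2
    group
  refine le_antisymm (fun g hg => ?_) hge
  have h2 := key _ (hge (key g hg))
  have heq : θ * (θ * g * θ⁻¹) * θ⁻¹ = (θ * θ) * g * (θ * θ)⁻¹ := by group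
  rwa [heq, hθ2, one_mul, inv_one, mul_one] at h2
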